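/- In the special case $w_1 = -1$, $w_2 = 1$, $w_3 = -w$, $w_4 = w$ for $w \in \mathbb{C}$ with $w \neq \pm 1$, $w \neq 0$, the hyperbolic distance $d$ between the geodesic with endpoints $-1,1$ and the geodesic with endpoints $-w,w$ in the upper half-space model satisfies $\cosh d = \frac{1 + |\lambda|}{|1-\lambda|}$ where $\lambda = \frac{(-1+w)(1-w)}{(-1-w)(1+w)}$. -/

import Mathlib

set_option maxHeartbeats 1000000


open OnePoint

/-- cosh of the hyperbolic distance between two points of the upper
half-space model of `ℍ³`; a point is a pair `(z, t)` with `z : ℂ` and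
height `t > 0`. -/
noncomputable def coshD (p q : ℂ × ℝ) : ℝ :=
  1 + (‖p.1 - q.1‖ ^ 2 + (p.2 - q.2) ^ 2) / (2 * p.2 * q.2)

/-- The geodesic of the upper half-space model with the given pair of
(distinct) endpoints in `ℂ ∪ {∞}`: a vertical line if one endpoint is `∞`,
otherwise the semicircle over the segment joining the two endpoints. -/
noncomputable def geodesicUHS : OnePoint ℂ → OnePoint ℂ → Set (ℂ × ℝ)
  | OnePoint.infty, OnePoint.infty => ∅
  | OnePoint.infty, (b : ℂ) => {p | 0 < p.2 ∧ p.1 = b}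
  | (a : ℂ), OnePoint.infty => {p | 0 < p.2 ∧ p.1 = a}
  | (a : ℂ), (b : ℂ) =>
      {p | 0 < p.2 ∧ (∃ s : ℝ, p.1 = a + (s : ℂ) * (b - a)) ∧
        ‖p.1 - (a + b) / 2‖ ^ 2 + p.2 ^ 2 = ‖b - a‖ ^ 2 / 4}

/-- The inverse hyperbolic cosine. -/
noncomputable def arcosh (x : ℝ) : ℝ := Real.log (x + Real.sqrt (x ^ 2 - 1))

noncomputable def geodDist (S T : Set (ℂ × ℝ)) : ℝ :=
  sInf {d : ℝ | ∃ p ∈ S, ∃ q ∈ T, d = arcosh (coshD p q)}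

/-- Auxiliary: the finite value of an extended complex number (junk value `0` at `∞`). -/
noncomputable def fv : OnePoint ℂ → ℂ
  | OnePoint.infty => 0
  | (a : ℂ) => a

open Classical in
/-- The cross-ratio `[w₁,w₂;w₃,w₄]` of four extended complex numbers (at most one
of which is `∞` when they are pairwise distinct). -/
noncomputable def crossRatio (w1 w2 w3 w4 : OnePoint ℂ) : ℂ :=
  if w1 = OnePoint.infty then (fv w2 - fv w4) / (fv w2 - fv w3)
  else if w2 = OnePoint.infty then (fv w1 - fv w3) / (fv w1 - fv w4)
  else if w3 = OnePoint.infty then (fv w2 - fv w4) / (fv w1 - fv w4)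
  else if w4 = OnePoint.infty then (fv w1 - fv w3) / (fv w2 - fv w3)
  else ((fv w1 - fv w3) * (fv w2 - fv w4)) / ((fv w1 - fv w4) * (fv w2 - fv w3))

lemma mem_geod {a b : ℂ} {p : ℂ × ℝ} :
  p ∈ geodesicUHS (a : OnePoint ℂ) (b : OnePoint ℂ) ↔
  (0 < p.2 ∧ (∃ s : ℝ, p.1 = a + (s:ℂ)*(b-a)) ∧
    ‖p.1 - (a+b)/2‖^2 + p.2^2 = ‖b-a‖^2/4) := Iff.rfl

lemma arcosh_mono {a b : ℝ} (ha : 1 ≤ a) (hab : a ≤ b) : arcosh a ≤ arcosh b := by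
  unfold arcosh
  have h2 : Real.sqrt (a^2-1) ≤ Real.sqrt (b^2-1) := Real.sqrt_le_sqrt (by nlinarith)
  have h3 : (0:ℝ) < a + Real.sqrt (a^2-1) := by
    have := Real.sqrt_nonneg (a^2-1); linarith
  exact Real.log_le_log h3 (by linarith)

lemma cosh_arcosh {x : ℝ} (hx : 1 ≤ x) : Real.cosh (arcosh x) = x := by
  unfold arcosh
  have h0 : (0:ℝ) ≤ x^2 - 1 := by nlinarith
  have hs : Real.sqrt (x^2-1) ^ 2 = x^2 - 1 := Real.sq_sqrt h0
  have hy : (0:ℝ) < x + Real.sqrt (x^2-1) := by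
    have := Real.sqrt_nonneg (x^2-1); linarith
  rw [Real.cosh_eq, Real.exp_log hy, Real.exp_neg, Real.exp_log hy]
  have hmul : (x + Real.sqrt (x^2-1)) * (x - Real.sqrt (x^2-1)) = 1 := by nlinarith [hs]
  field_simp
  nlinarith [hs, hy]

lemma key {R : ℝ} (hR : 0 < R) (p q : ℂ × ℝ) (hp2 : 0 < p.2) (hq2 : 0 < q.2)
    (hp : ‖p.1‖ ^ 2 + p.2 ^ 2 = 1)
    (hq : ‖q.1‖ ^ 2 + q.2 ^ 2 = R ^ 2) :
    (1 + R^2) / (2*R) ≤ coshD p q := by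
  obtain ⟨p1, u⟩ := p
  obtain ⟨q1, v⟩ := q
  simp only at hp hq hp2 hq2
  rw [Complex.sq_norm, Complex.normSq_apply] at hp hq
  set a := p1.re; set b := p1.im; set c := q1.re; set d := q1.im
  have ha2 : a^2 + b^2 = 1 - u^2 := by nlinarith [hp]
  have hc2 : c^2 + d^2 = R^2 - v^2 := by nlinarith [hq]
  have hu1 : u ≤ 1 := by nlinarith [sq_nonneg a, sq_nonneg b]
  have hvR : v ≤ R := by nlinarith [sq_nonneg c, sq_nonneg d]
  have hRuv : u * v ≤ R := by nlinarith
  have lag : (a*c + b*d)^2 ≤ (1 - u^2) * (R^2 - v^2) := by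
    rw [← ha2, ← hc2]; nlinarith [sq_nonneg (a*d - b*c)]
  have hY : (0:ℝ) ≤ (1 + R^2) * (R - u*v) := by nlinarith
  have h5 : 4*R^2*((1 - u^2)*(R^2 - v^2)) ≤ ((1 + R^2)*(R - u*v))^2 := by
    nlinarith [sq_nonneg ((1 - R^2)*(R - u*v)), sq_nonneg (2*R*(v - R*u))]
  have hsq : (2*R*(a*c + b*d))^2 ≤ ((1 + R^2)*(R - u*v))^2 := by
    have h4 : 4*R^2*((a*c+b*d)^2) ≤ 4*R^2*((1 - u^2)*(R^2 - v^2)) :=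
      mul_le_mul_of_nonneg_left lag (by positivity)
    calc (2*R*(a*c + b*d))^2 = 4*R^2*((a*c+b*d)^2) := by ring
    _ ≤ 4*R^2*((1 - u^2)*(R^2 - v^2)) := h4
    _ ≤ ((1 + R^2)*(R - u*v))^2 := h5
  have hXY : 2*R*(a*c + b*d) ≤ (1 + R^2)*(R - u*v) := by
    calc 2*R*(a*c + b*d) ≤ |2*R*(a*c + b*d)| := le_abs_self _
    _ = Real.sqrt ((2*R*(a*c + b*d))^2) := (Real.sqrt_sq_eq_abs _).symm
    _ ≤ Real.sqrt (((1 + R^2)*(R - u*v))^2) := Real.sqrt_le_sqrt hsq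
    _ = (1 + R^2)*(R - u*v) := Real.sqrt_sq hY
  unfold coshD
  simp only
  rw [Complex.sq_norm, Complex.normSq_apply, Complex.sub_re, Complex.sub_im]
  rw [show (1:ℝ) + ((a - c)*(a - c) + (b - d)*(b - d) + (u - v)^2) / (2*u*v)
      = (2*u*v + ((a - c)*(a - c) + (b - d)*(b - d) + (u - v)^2)) / (2*u*v) by
    field_simp]
  rw [div_le_div_iff₀ (by positivity) (by positivity)]
  nlinarith [hXY, ha2, hc2]

/-- Special case of the cross-ratio distance formula: the hyperbolic distance `d`
between the geodesic with endpoints `-1, 1` and the geodesic with endpoints `-w, w`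
satisfies `cosh d = (1 + |λ|)/|1 - λ|` with `λ = ((-1+w)(1-w))/((-1-w)(1+w))`. -/
theorem cosh_dist_special_case (w : ℂ) (hw1 : w ≠ 1) (hw2 : w ≠ -1) (hw0 : w ≠ 0)
    (hdisj : Disjoint (geodesicUHS ((-1 : ℂ) : OnePoint ℂ) ((1 : ℂ) : OnePoint ℂ))
      (geodesicUHS ((-w : ℂ) : OnePoint ℂ) ((w : ℂ) : OnePoint ℂ))) :
    Real.cosh (geodDist (geodesicUHS ((-1 : ℂ) : OnePoint ℂ) ((1 : ℂ) : OnePoint ℂ))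
        (geodesicUHS ((-w : ℂ) : OnePoint ℂ) ((w : ℂ) : OnePoint ℂ))) =
      (1 + ‖((-1 + w) * (1 - w)) / ((-1 - w) * (1 + w))‖) /
        ‖1 - ((-1 + w) * (1 - w)) / ((-1 - w) * (1 + w))‖ := by
  set R : ℝ := ‖w‖ with hRdef
  have hR : 0 < R := norm_pos_iff.mpr hw0
  set K : ℝ := (1 + R^2) / (2*R) with hKdef
  have hK1 : 1 ≤ K := by rw [hKdef, le_div_iff₀ (by positivity)]; nlinarith [sq_nonneg (R - 1)]
  have h1w : (1 : ℂ) + w ≠ 0 := fun h => hw2 (by linear_combination h)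
  have h1w' : (1 : ℂ) - w ≠ 0 := fun h => hw1 (by linear_combination -h)
  -- membership facts
  have hmem1 : ((0:ℂ), (1:ℝ)) ∈ geodesicUHS ((-1 : ℂ) : OnePoint ℂ) ((1 : ℂ) : OnePoint ℂ) := by
    rw [mem_geod]
    refine ⟨one_pos, ⟨1/2, by norm_num⟩, by norm_num⟩
  have hmem2 : ((0:ℂ), R) ∈ geodesicUHS ((-w : ℂ) : OnePoint ℂ) ((w : ℂ) : OnePoint ℂ) := by
    rw [mem_geod]
    refine ⟨hR, ⟨1/2, by push_cast; ring⟩, ?_⟩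
    simp only
    rw [show (-w + w)/2 = 0 by ring, show w - -w = 2*w by ring, sub_zero, norm_mul]
    simp [hRdef]
    ring
  have hval : arcosh (coshD ((0:ℂ), (1:ℝ)) ((0:ℂ), R)) = arcosh K := by
    congr 1
    unfold coshD
    simp only
    rw [hKdef]
    field_simp
    simp only [sub_self, mul_zero, norm_zero]
    ring
  set Sd := {d : ℝ | ∃ p ∈ geodesicUHS ((-1 : ℂ) : OnePoint ℂ) ((1 : ℂ) : OnePoint ℂ),
      ∃ q ∈ geodesicUHS ((-w : ℂ) : OnePoint ℂ) ((w : ℂ) : OnePoint ℂ),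
      d = arcosh (coshD p q)} with hSd
  have hmemS : arcosh K ∈ Sd := ⟨_, hmem1, _, hmem2, hval.symm⟩
  have hlb : ∀ d ∈ Sd, arcosh K ≤ d := by
    rintro d ⟨p, hp, q, hq, rfl⟩
    rw [mem_geod] at hp hq
    obtain ⟨hp2, -, hpc⟩ := hp
    obtain ⟨hq2, -, hqc⟩ := hq
    have hpc' : ‖p.1‖ ^ 2 + p.2 ^ 2 = 1 := by
      rw [show ((-1:ℂ) + 1)/2 = 0 by ring, sub_zero] at hpc
      rw [show (1:ℂ) - -1 = 2 by ring] at hpc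
      norm_num [Complex.norm_two] at hpc
      exact hpc
    have hqc' : ‖q.1‖ ^ 2 + q.2 ^ 2 = R ^ 2 := by
      rw [show (-w + w)/2 = 0 by ring, sub_zero, show w - -w = 2*w by ring, norm_mul] at hqc
      rw [hqc]
      simp [hRdef]
      ring
    exact arcosh_mono hK1 (key hR p q hp2 hq2 hpc' hqc')
  have hdist : geodDist (geodesicUHS ((-1 : ℂ) : OnePoint ℂ) ((1 : ℂ) : OnePoint ℂ))
      (geodesicUHS ((-w : ℂ) : OnePoint ℂ) ((w : ℂ) : OnePoint ℂ)) = arcosh K := by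
    unfold geodDist
    exact le_antisymm (csInf_le ⟨arcosh K, hlb⟩ hmemS) (le_csInf ⟨_, hmemS⟩ hlb)
  rw [hdist, cosh_arcosh hK1]
  -- now the algebraic identity
  have hlam : ((-1 + w) * (1 - w)) / ((-1 - w) * (1 + w)) = (1 - w)^2 / (1 + w)^2 := by
    have hden : (-1 - w) * (1 + w) ≠ 0 :=
      mul_ne_zero (fun h => h1w (by linear_combination -h)) h1w
    rw [div_eq_div_iff hden (pow_ne_zero 2 h1w)]
    ring
  have hone : (1:ℂ) - (1 - w)^2 / (1 + w)^2 = 4*w / (1 + w)^2 := by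
    field_simp
    ring
  rw [hlam, hone, norm_div, norm_div, norm_pow, norm_pow, norm_mul]
  have hA : 0 < ‖1 + w‖ := norm_pos_iff.mpr h1w
  have hsum : ‖1 - w‖ ^ 2 + ‖1 + w‖ ^ 2 = 2 + 2 * R^2 := by
    rw [Complex.sq_norm, Complex.sq_norm, hRdef, Complex.sq_norm]
    rw [Complex.normSq_apply, Complex.normSq_apply, Complex.normSq_apply]
    simp [Complex.add_re, Complex.add_im, Complex.sub_re, Complex.sub_im]
    ring
  have hnum : (1:ℝ) + ‖1-w‖^2 / ‖1+w‖^2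
      = (2 + 2*R^2) / ‖1+w‖^2 := by
    field_simp
    linear_combination hsum
  rw [hKdef, hnum, show ‖(4:ℂ)‖ = 4 by norm_num, ← hRdef]
  rw [div_div_div_eq]
  rw [div_eq_div_iff (by positivity) (by positivity)]
  ring
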